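/- Let (\gamma_k)_{k=0}^{\infty} be a sequence of real numbers, and define S(k) = \sum_{j=0}^{k} \gamma_j and A(k) = S(k)/(k+1). If \{A(k)\}_{k=0}^{\infty} is a multiplier sequence, then \{S(k)\}_{k=0}^{\infty} is a multiplier sequence. -/

import Mathlib

/-- The polynomial obtained by applying the sequence `γ` coefficientwise:
`T[∑ aₖ xᵏ] = ∑ γₖ aₖ xᵏ`. -/
noncomputable def applySeq (γ : ℕ → ℝ) (p : Polynomial ℝ) : Polynomial ℝ :=
  ∑ k ∈ Finset.range (p.natDegree + 1), Polynomial.C (γ k * p.coeff k) * Polynomial.X ^ k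

/-- A real polynomial has only real roots (over `ℂ`). -/
def RealRooted (p : Polynomial ℝ) : Prop :=
  ∀ z : ℂ, Polynomial.aeval z p = 0 → z.im = 0

/-- A classical multiplier sequence. -/
def IsMultiplierSequence (γ : ℕ → ℝ) : Prop :=
  ∀ p : Polynomial ℝ, RealRooted p → RealRooted (applySeq γ p)

open Polynomial in
lemma applySeq_coeff (γ : ℕ → ℝ) (p : Polynomial ℝ) (n : ℕ) :
    (applySeq γ p).coeff n = γ n * p.coeff n := by
  unfold applySeq
  rw [finset_sum_coeff]
  simp only [coeff_C_mul, coeff_X_pow, mul_ite, mul_one, mul_zero]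
  rw [Finset.sum_ite_eq (Finset.range (p.natDegree + 1)) n (fun k => γ k * p.coeff k)]
  by_cases h : n ∈ Finset.range (p.natDegree + 1)
  · simp [h]
  · simp only [h, if_false]
    rw [Finset.mem_range, not_lt] at h
    rw [p.coeff_eq_zero_of_natDegree_lt (by omega), mul_zero]

lemma not_realRooted_zero : ¬ RealRooted 0 := by
  intro h
  have := h Complex.I (by simp)
  simp [Complex.I_im] at this

open Polynomial in
lemma realRooted_ne_zero {p : Polynomial ℝ} (h : RealRooted p) : p ≠ 0 := by
  rintro rfl; exact not_realRooted_zero h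

open Polynomial in
lemma aeval_eq_zero_iff_mem_roots {p : Polynomial ℝ} (hp : p ≠ 0) (z : ℂ) :
    aeval z p = 0 ↔ z ∈ (p.map (algebraMap ℝ ℂ)).roots := by
  have hq0 : p.map (algebraMap ℝ ℂ) ≠ 0 :=
    (Polynomial.map_ne_zero_iff (algebraMap ℝ ℂ).injective).mpr hp
  rw [mem_roots hq0, IsRoot, eval_map, ← aeval_def]

open Polynomial in
lemma card_roots_of_realRooted {p : Polynomial ℝ} (hp : p ≠ 0) (h : RealRooted p) :
    Multiset.card p.roots = p.natDegree := by
  classical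
  set q := p.map (algebraMap ℝ ℂ) with hq
  have hq0 : q ≠ 0 := (Polynomial.map_ne_zero_iff (algebraMap ℝ ℂ).injective).mpr hp
  have hroots : q.roots = p.roots.map (algebraMap ℝ ℂ) := by
    refine Multiset.ext.mpr fun z => ?_
    by_cases hz : z.im = 0
    · have hz' : (algebraMap ℝ ℂ) z.re = z := by
        apply Complex.ext <;> simp [hz]
      rw [← hz', Multiset.count_map_eq_count' _ _ (algebraMap ℝ ℂ).injective,
        count_roots, count_roots, hq,
        eq_rootMultiplicity_map (algebraMap ℝ ℂ).injective]
    · have h1 : z ∉ q.roots := by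
        intro hmem
        exact hz (h z ((aeval_eq_zero_iff_mem_roots hp z).mpr hmem))
      have h2 : z ∉ p.roots.map (algebraMap ℝ ℂ) := by
        intro hmem
        obtain ⟨a, _, rfl⟩ := Multiset.mem_map.mp hmem
        simp at hz
      rw [Multiset.count_eq_zero_of_notMem h1, Multiset.count_eq_zero_of_notMem h2]
  have hcard : Multiset.card q.roots = q.natDegree :=
    (splits_iff_card_roots.mp (IsAlgClosed.splits _))
  have : q.natDegree = p.natDegree := natDegree_map _
  rw [hroots, Multiset.card_map] at hcard
  omega

open Polynomial in
lemma realRooted_of_card_roots {p : Polynomial ℝ} (hp : p ≠ 0)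
    (h : Multiset.card p.roots = p.natDegree) : RealRooted p := by
  intro z hz
  have hsplit : Splits p := splits_iff_card_roots.mpr h
  have hroots : (p.map (algebraMap ℝ ℂ)).roots = p.roots.map (algebraMap ℝ ℂ) :=
    hsplit.roots_map _
  have := (aeval_eq_zero_iff_mem_roots hp z).mp hz
  rw [hroots] at this
  obtain ⟨a, _, rfl⟩ := Multiset.mem_map.mp this
  simp

open Polynomial in
lemma realRooted_derivative_X_mul {q : Polynomial ℝ} (hq0 : q ≠ 0) (hq : RealRooted q) :
    RealRooted (derivative (X * q)) := by
  set r : Polynomial ℝ := X * q with hr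
  have hr0 : r ≠ 0 := mul_ne_zero X_ne_zero hq0
  have hrdeg : r.natDegree = q.natDegree + 1 := by
    rw [hr, natDegree_mul X_ne_zero hq0, natDegree_X]; ring
  have hrroots : Multiset.card r.roots = r.natDegree := by
    have hcq := card_roots_of_realRooted hq0 hq
    rw [hr, roots_mul (mul_ne_zero X_ne_zero hq0), roots_X, Multiset.card_add, hcq, ← hr, hrdeg]
    simp [add_comm]
  have hdpos : 0 < r.natDegree := by omega
  have hddeg : (derivative r).degree = (r.natDegree - 1 : ℕ) := degree_derivative_eq r hdpos
  have hd0 : derivative r ≠ 0 := by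
    intro h
    rw [h, degree_zero] at hddeg
    exact (by simp : (⊥ : WithBot ℕ) ≠ _) hddeg
  have hdnat : (derivative r).natDegree = r.natDegree - 1 := natDegree_eq_of_degree_eq_some hddeg
  have hle : Multiset.card r.roots ≤ Multiset.card (derivative r).roots + 1 :=
    card_roots_le_derivative r
  have hub : Multiset.card (derivative r).roots ≤ (derivative r).natDegree :=
    card_roots' _
  refine realRooted_of_card_roots hd0 ?_
  omega

theorem sum_ms_of_average_ms (γ : ℕ → ℝ)
    (hA : IsMultiplierSequence
      (fun k => (∑ j ∈ Finset.range (k + 1), γ j) / ((k : ℝ) + 1))) :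
    IsMultiplierSequence (fun k => ∑ j ∈ Finset.range (k + 1), γ j) := by
  intro p hp
  set A : ℕ → ℝ := fun k => (∑ j ∈ Finset.range (k + 1), γ j) / ((k : ℝ) + 1) with hAdef
  set q := applySeq A p with hqdef
  have hq : RealRooted q := hA p hp
  have hq0 : q ≠ 0 := realRooted_ne_zero hq
  have key : applySeq (fun k => ∑ j ∈ Finset.range (k + 1), γ j) p
      = Polynomial.derivative (Polynomial.X * q) := by
    apply Polynomial.ext
    intro n
    rw [applySeq_coeff]
    rw [Polynomial.coeff_derivative]
    rw [Polynomial.coeff_X_mul]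
    rw [hqdef, applySeq_coeff]
    have hne : ((n : ℝ) + 1) ≠ 0 := by positivity
    rw [hAdef]
    field_simp
  rw [key]
  exact realRooted_derivative_X_mul hq0 hq
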